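/- For 2 ≤ x ≤ p-1, writing x = p + ε - x' with ε ∈ {0,1} chosen so that size(x') = size(x) - 1, there is a short exact sequence of kC_p-modules 0 → M_{x'} → P → M_x → 0 where P = M_p if ε = 0 and P = M_p ⊕ M_1 if ε = 1; in both cases P is a permutation module. -/

import Mathlib

open Polynomial

noncomputable section

/-- `Mmod k i` is the `k[T]`-module `M_i = k[T]/(T^i)`. -/
abbrev Mmod (k : Type) [Field k] (i : ℕ) : Type :=
  Polynomial k ⧸ Ideal.span {(X : Polynomial k) ^ i}

/-- A permutation `kC_p`-module: a direct sum of copies of `kC_p = k[T]/T^p`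
and the trivial module `k = k[T]/T`. -/
def IsPermMod (k : Type) [Field k] (p : ℕ) (M : Type) [AddCommGroup M]
    [Module (Polynomial k) M] : Prop :=
  ∃ r s : ℕ,
    Nonempty (M ≃ₗ[Polynomial k] ((Fin r → Mmod k p) × (Fin s → Mmod k 1)))

/-- `m` has depth `i`: `m ∈ T^i M` but `m ∉ T^{i+1} M`. -/
def HasDepth (k : Type) [Field k] {M : Type} [AddCommGroup M] [Module (Polynomial k) M]
    (i : ℕ) (m : M) : Prop :=
  (∃ y : M, m = (X : Polynomial k) ^ i • y) ∧ ¬ ∃ y : M, m = (X : Polynomial k) ^ (i + 1) • y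

/-- `α` is the nilpotency index of `m` with respect to `T`. -/
def IsIndex (k : Type) [Field k] {M : Type} [AddCommGroup M] [Module (Polynomial k) M]
    (α : ℕ) (m : M) : Prop :=
  (X : Polynomial k) ^ α • m = 0 ∧ ∀ β < α, (X : Polynomial k) ^ β • m ≠ 0

/-- `M` admits a resolution `0 → P_s → ⋯ → P_0 → M → 0` by permutation `kC_p`-modules. -/
def HasPermRes (k : Type) [Field k] (p : ℕ) :
    (s : ℕ) → (M : Type) → [AddCommGroup M] → [Module (Polynomial k) M] → Prop
  | 0, M, _, _ => IsPermMod k p M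
  | (s + 1), M, _, _ =>
      ∃ (P : Type) (_ : AddCommGroup P) (_ : Module (Polynomial k) P)
        (f : P →ₗ[Polynomial k] M), IsPermMod k p P ∧ Function.Surjective f ∧
          HasPermRes k p s (LinearMap.ker f)

/-- The `p`-permutation dimension of `M`: minimal length of a permutation resolution. -/
def ppdim (k : Type) [Field k] (p : ℕ) (M : Type) [AddCommGroup M]
    [Module (Polynomial k) M] : ℕ :=
  sInf {s | HasPermRes k p s M}

/-- The `p`-distance function: `f 1 = f p = 0` and
`f x = min (f (p-x)) (f (p-x+1)) + 1` for `2 ≤ x ≤ p-1`. -/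
def IsSizeFun (p : ℕ) (f : ℕ → ℕ) : Prop :=
  f 1 = 0 ∧ f p = 0 ∧ ∀ x, 2 ≤ x → x ≤ p - 1 → f x = min (f (p - x)) (f (p - x + 1)) + 1

section Stmt12Aux

def red (k : Type) [Field k] (i j : ℕ) (h : i ≤ j) : Mmod k j →ₗ[Polynomial k] Mmod k i :=
  Submodule.mapQ _ _ LinearMap.id (by
    intro f hf
    simp only [Submodule.mem_comap, LinearMap.id_apply]
    rw [Ideal.mem_span_singleton] at hf ⊢
    exact dvd_trans (pow_dvd_pow _ h) hf)

def mulX (k : Type) [Field k] (c i j : ℕ) (h : i ≤ c + j) : Mmod k j →ₗ[Polynomial k] Mmod k i :=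
  Submodule.mapQ _ _ (LinearMap.mulLeft (Polynomial k) ((X : Polynomial k) ^ c)) (by
    intro f hf
    simp only [Submodule.mem_comap, LinearMap.mulLeft_apply]
    rw [Ideal.mem_span_singleton] at hf ⊢
    calc (X : Polynomial k) ^ i ∣ X ^ (c + j) := pow_dvd_pow _ h
    _ ∣ X ^ c * f := by rw [pow_add]; exact mul_dvd_mul_left _ hf)

theorem red_mk (k : Type) [Field k] (i j : ℕ) (h : i ≤ j) (f : Polynomial k) :
    red k i j h (Submodule.Quotient.mk f) = Submodule.Quotient.mk f :=
  Submodule.mapQ_apply _ _ _ f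

theorem mulX_mk (k : Type) [Field k] (c i j : ℕ) (h : i ≤ c + j) (f : Polynomial k) :
    mulX k c i j h (Submodule.Quotient.mk f) = Submodule.Quotient.mk ((X:Polynomial k)^c * f) :=
  Submodule.mapQ_apply _ _ _ f

theorem mk_eq_zero' (k : Type) [Field k] (i : ℕ) (f : Polynomial k) :
    (Submodule.Quotient.mk f : Mmod k i) = 0 ↔ (X:Polynomial k)^i ∣ f := by
  rw [Submodule.Quotient.mk_eq_zero]; exact Ideal.mem_span_singleton

theorem mk_eq_mk' (k : Type) [Field k] (i : ℕ) (f g : Polynomial k) :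
    (Submodule.Quotient.mk f : Mmod k i) = Submodule.Quotient.mk g ↔
      (X:Polynomial k)^i ∣ f - g := by
  rw [Submodule.Quotient.eq]; exact Ideal.mem_span_singleton

def permE1 (k : Type) [Field k] (M N : Type) [AddCommGroup M] [Module (Polynomial k) M]
    [AddCommGroup N] [Module (Polynomial k) N] :
    M ≃ₗ[Polynomial k] ((Fin 1 → M) × (Fin 0 → N)) where
  toFun m := (fun _ => m, fun i => i.elim0)
  invFun q := q.1 0
  map_add' a b := by
    refine Prod.ext rfl ?_
    funext i; exact i.elim0
  map_smul' r a := by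
    refine Prod.ext rfl ?_
    funext i; exact i.elim0
  left_inv m := rfl
  right_inv q := by
    refine Prod.ext ?_ ?_
    · funext i
      have : i = 0 := Subsingleton.elim _ _
      subst this; rfl
    · funext i; exact i.elim0

theorem isPermMod_Mp (k : Type) [Field k] (p : ℕ) : IsPermMod k p (Mmod k p) :=
  ⟨1, 0, ⟨permE1 k _ _⟩⟩

theorem isPermMod_MpM1 (k : Type) [Field k] (p : ℕ) :
    IsPermMod k p (Mmod k p × Mmod k 1) :=
  ⟨1, 1, ⟨LinearEquiv.prodCongr (LinearEquiv.funUnique (Fin 1) (Polynomial k) (Mmod k p)).symm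
      (LinearEquiv.funUnique (Fin 1) (Polynomial k) (Mmod k 1)).symm⟩⟩

end Stmt12Aux

/-- For `2 ≤ x ≤ p-1`, writing `x = p + ε - x'` with `ε ∈ {0,1}` chosen so that
`size x' = size x - 1`, there is a short exact sequence
`0 → M_{x'} → P → M_x → 0` with `P = M_p` if `ε = 0` and `P = M_p ⊕ M_1` if
`ε = 1`; in both cases `P` is a permutation module. -/
theorem stmt12 (k : Type) [Field k] (p : ℕ) (hp : p.Prime) [CharP k p]
    (x x' ε : ℕ) (hx2 : 2 ≤ x) (hxp : x ≤ p - 1)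
    (hε : ε = 0 ∨ ε = 1) (hxx' : x + x' = p + ε)
    (f : ℕ → ℕ) (hf : IsSizeFun p f) (hsize : f x' + 1 = f x) :
    ((ε = 0 → ∃ (g : Mmod k x' →ₗ[Polynomial k] Mmod k p)
        (h : Mmod k p →ₗ[Polynomial k] Mmod k x),
        Function.Injective g ∧ Function.Surjective h ∧
          LinearMap.range g = LinearMap.ker h) ∧
      (ε = 1 → ∃ (g : Mmod k x' →ₗ[Polynomial k] (Mmod k p × Mmod k 1))
        (h : (Mmod k p × Mmod k 1) →ₗ[Polynomial k] Mmod k x),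
        Function.Injective g ∧ Function.Surjective h ∧
          LinearMap.range g = LinearMap.ker h)) ∧
      IsPermMod k p (Mmod k p) ∧ IsPermMod k p (Mmod k p × Mmod k 1) := by
  have hp2 : 2 ≤ p := hp.two_le
  have hxle : x ≤ p := le_trans hxp (Nat.sub_le _ _)
  have hXne : (X : Polynomial k) ≠ 0 := X_ne_zero
  refine ⟨⟨?_, ?_⟩, isPermMod_Mp k p, isPermMod_MpM1 k p⟩
  · -- ε = 0
    rintro rfl
    have hxx : x + x' = p := by omega
    refine ⟨mulX k x p x' (by omega), red k x p hxle, ?_, ?_, ?_⟩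
    · rw [← LinearMap.ker_eq_bot, eq_bot_iff]
      rintro m hm
      obtain ⟨q, rfl⟩ := Submodule.Quotient.mk_surjective _ m
      rw [LinearMap.mem_ker, mulX_mk, mk_eq_zero'] at hm
      rw [Submodule.mem_bot, mk_eq_zero']
      have h5 : (X : Polynomial k) ^ x * X ^ x' ∣ X ^ x * q := by
        rwa [← pow_add, hxx]
      exact (mul_dvd_mul_iff_left (pow_ne_zero x hXne)).mp h5
    · intro m
      obtain ⟨q, rfl⟩ := Submodule.Quotient.mk_surjective _ m
      exact ⟨Submodule.Quotient.mk q, red_mk k x p hxle q⟩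
    · ext m
      obtain ⟨a, rfl⟩ := Submodule.Quotient.mk_surjective _ m
      rw [LinearMap.mem_ker, LinearMap.mem_range, red_mk, mk_eq_zero']
      constructor
      · rintro ⟨y, hy⟩
        obtain ⟨q, rfl⟩ := Submodule.Quotient.mk_surjective _ y
        rw [mulX_mk, mk_eq_mk'] at hy
        obtain ⟨t, ht⟩ := hy
        refine ⟨q - X ^ x' * t, ?_⟩
        have h6 : a = X ^ x * q - X ^ p * t := by rw [← ht]; ring
        rw [h6, ← hxx, pow_add]; ring
      · rintro ⟨q, rfl⟩
        exact ⟨Submodule.Quotient.mk q, mulX_mk k x p x' (by omega) q⟩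
  · -- ε = 1
    rintro rfl
    have hxx : x + x' = p + 1 := by omega
    have h1 : p ≤ (x - 1) + x' := by omega
    have h2 : x ≤ (x - 1) + 1 := by omega
    have hg2 : (1 : ℕ) ≤ x' := by omega
    have ex : (X : Polynomial k) ^ (x - 1) * X = X ^ x := by
      rw [← pow_succ, show x - 1 + 1 = x from by omega]
    refine ⟨LinearMap.prod (mulX k (x-1) p x' h1) (-(red k 1 x' hg2)),
      LinearMap.coprod (red k x p hxle) (mulX k (x-1) x 1 h2), ?_, ?_, ?_⟩
    · rw [← LinearMap.ker_eq_bot, eq_bot_iff]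
      rintro m hm
      obtain ⟨q, rfl⟩ := Submodule.Quotient.mk_surjective _ m
      rw [LinearMap.mem_ker] at hm
      simp only [LinearMap.prod_apply, Function.prod_apply, Prod.ext_iff, Prod.fst_zero, Prod.snd_zero] at hm
      obtain ⟨hm1, hm2⟩ := hm
      rw [mulX_mk, mk_eq_zero'] at hm1
      rw [LinearMap.neg_apply, neg_eq_zero, red_mk, mk_eq_zero', pow_one] at hm2
      rw [Submodule.mem_bot, mk_eq_zero']
      obtain ⟨q1, rfl⟩ := hm2
      have h3 : (X : Polynomial k) ^ x * X ^ (x' - 1) ∣ X ^ x * q1 := by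
        rw [← pow_add, show x + (x' - 1) = p from by omega]
        have h7 : (X : Polynomial k) ^ (x - 1) * (X * q1) = X ^ x * q1 := by
          rw [← mul_assoc, ex]
        rwa [h7] at hm1
      obtain ⟨t, rfl⟩ := (mul_dvd_mul_iff_left (pow_ne_zero x hXne)).mp h3
      refine ⟨t, ?_⟩
      rw [← mul_assoc, ← pow_succ', show x' - 1 + 1 = x' from by omega]
    · intro m
      obtain ⟨q, rfl⟩ := Submodule.Quotient.mk_surjective _ m
      refine ⟨(Submodule.Quotient.mk q, 0), ?_⟩
      rw [LinearMap.coprod_apply, map_zero, add_zero, red_mk]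
    · ext m
      obtain ⟨m1, m2⟩ := m
      obtain ⟨a, rfl⟩ := Submodule.Quotient.mk_surjective _ m1
      obtain ⟨c, rfl⟩ := Submodule.Quotient.mk_surjective _ m2
      rw [LinearMap.mem_ker, LinearMap.mem_range, LinearMap.coprod_apply, red_mk, mulX_mk,
        ← Submodule.Quotient.mk_add, mk_eq_zero']
      constructor
      · rintro ⟨y, hy⟩
        obtain ⟨q, rfl⟩ := Submodule.Quotient.mk_surjective _ y
        simp only [LinearMap.prod_apply, Function.prod_apply, Prod.ext_iff] at hy
        obtain ⟨hy1, hy2⟩ := hy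
        rw [mulX_mk, mk_eq_mk'] at hy1
        rw [LinearMap.neg_apply, red_mk, ← Submodule.Quotient.mk_neg, mk_eq_mk'] at hy2
        obtain ⟨t, ht⟩ := hy1
        obtain ⟨s, hs⟩ := hy2
        refine ⟨-s - X ^ (p - x) * t, ?_⟩
        have ep : (X : Polynomial k) ^ p = X ^ (x - 1) * X * X ^ (p - x) := by
          rw [ex, ← pow_add, show x + (p - x) = p from by omega]
        rw [ep] at ht
        rw [show (X : Polynomial k) ^ x = X ^ (x - 1) * X from ex.symm]
        linear_combination (-1 : Polynomial k) * ht - (X : Polynomial k) ^ (x - 1) * hs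
      · intro hker
        obtain ⟨b, hb⟩ := hker
        refine ⟨Submodule.Quotient.mk (-c + X * b), ?_⟩
        simp only [LinearMap.prod_apply, Function.prod_apply]
        rw [LinearMap.neg_apply, mulX_mk, red_mk]
        have hfst : (X : Polynomial k) ^ (x - 1) * (-c + X * b) = a := by
          calc (X : Polynomial k) ^ (x - 1) * (-c + X * b)
              = -(X ^ (x - 1) * c) + (X ^ (x - 1) * X) * b := by ring
            _ = -(X ^ (x - 1) * c) + (a + X ^ (x - 1) * c) := by rw [ex, ← hb]
            _ = a := by ring
        refine Prod.ext ?_ ?_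
        · dsimp only
          rw [hfst]
        · dsimp only
          rw [← Submodule.Quotient.mk_neg, mk_eq_mk']
          exact ⟨-b, by rw [pow_one]; ring⟩
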